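/- Let (xₙ) be a sequence in a Banach lattice X, and let (yₙ) and (zₙ) be decreasing sequences in X which are bounded below, such that ‖xₙ − yₙ‖ → 0 and ‖xₙ − zₙ‖ → 0. Assume there is a point-separating family M of positive linear functionals on X that are continuous from above (μxₙ ↓ 0 whenever xₙ ↓ 0) and extend to the set X_δ of infima of decreasing X-sequences in an ambient Dedekind σ-complete Riesz space. Then inf_n yₙ = inf_n zₙ (in the ambient space). -/

import Mathlib

lemma pos_lin_bounded {X : Type*} [NormedAddCommGroup X] [Lattice X] [HasSolidNorm X]
    [IsOrderedAddMonoid X] [NormedSpace ℝ X] [PosSMulStrictMono ℝ X] [PosSMulReflectLT ℝ X]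
    [CompleteSpace X] (f : X →ₗ[ℝ] ℝ) (hf : Monotone f) :
    ∃ C : ℝ, ∀ v : X, |f v| ≤ C * ‖v‖ := by
  have habs : ∀ v : X, |f v| ≤ f |v| := by
    intro v
    rw [abs_le]
    refine ⟨?_, hf (le_abs_self v)⟩
    have h1 := hf (neg_le_abs v)
    rw [map_neg] at h1
    linarith
  by_contra h
  push_neg at h
  choose v hv using fun n : ℕ => h ((n : ℝ) * 2 ^ n)
  have hvne : ∀ n, ‖v n‖ ≠ 0 := by
    intro n hn
    have h0 : v n = 0 := norm_eq_zero.1 hn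
    have := hv n
    rw [h0] at this
    simp at this
  have hXne : ∀ n : ℕ, (2 : ℝ) ^ n * ‖v n‖ ≠ 0 := fun n =>
    mul_ne_zero (by positivity) (hvne n)
  set u : ℕ → X := fun n => ((2 : ℝ) ^ n * ‖v n‖)⁻¹ • |v n| with hu
  have hupos : ∀ n, 0 ≤ u n := fun n =>
    smul_nonneg (inv_nonneg.2 (mul_nonneg (by positivity) (norm_nonneg _))) (abs_nonneg _)
  have hunorm : ∀ n, ‖u n‖ = (2 : ℝ)⁻¹ ^ n := by
    intro n
    rw [hu]
    simp only [norm_smul, norm_abs_eq_norm]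
    rw [Real.norm_eq_abs, abs_of_nonneg (inv_nonneg.2 (mul_nonneg (by positivity) (norm_nonneg _)))]
    rw [mul_inv, mul_assoc, inv_mul_cancel₀ (hvne n), mul_one, inv_pow]
  have hsum : Summable u := by
    apply Summable.of_norm
    simp only [hunorm]
    exact summable_geometric_of_lt_one (by norm_num) (by norm_num)
  have hfu : ∀ n : ℕ, (n : ℝ) < f (u n) := by
    intro n
    have hpos : 0 < ((2 : ℝ) ^ n * ‖v n‖)⁻¹ := by
      apply inv_pos.2
      exact mul_pos (by positivity) (lt_of_le_of_ne (norm_nonneg _) (Ne.symm (hvne n)))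
    have h1 : (n : ℝ) * 2 ^ n * ‖v n‖ < f |v n| := lt_of_lt_of_le (hv n) (habs _)
    have h2 := mul_lt_mul_of_pos_left h1 hpos
    have key : ((2 : ℝ) ^ n * ‖v n‖)⁻¹ * ((n : ℝ) * 2 ^ n * ‖v n‖) = n := by
      rw [show ((n : ℝ) * 2 ^ n * ‖v n‖ : ℝ) = (n : ℝ) * ((2 : ℝ) ^ n * ‖v n‖) by ring,
        mul_comm, mul_assoc, mul_inv_cancel₀ (hXne n), mul_one]
    rw [hu]
    simp only [map_smul, smul_eq_mul]
    calc (n : ℝ) = ((2 : ℝ) ^ n * ‖v n‖)⁻¹ * ((n : ℝ) * 2 ^ n * ‖v n‖) := key.symm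
      _ < _ := h2
  set s := ∑' n, u n with hs
  have hle : ∀ n, f (u n) ≤ f s := fun n =>
    hf (Summable.le_tsum hsum n fun j _ => hupos j)
  obtain ⟨n, hn⟩ := exists_nat_gt (f s)
  exact absurd (lt_of_lt_of_le (hfu n) (hle n)) (not_lt.2 (le_of_lt hn))


/-- If `(yₙ)` and `(zₙ)` are decreasing sequences in a Banach lattice `X`, bounded below, and
both norm-asymptotic to a sequence `(xₙ)`, then their infima in the ambient Dedekind
σ-complete Riesz space `Xbar` coincide, provided there is a point-separating family `M` of
positive linear functionals continuous from above on the set `X_δ` of infima of decreasing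
`X`-sequences. -/
theorem stmt5 {X Xbar : Type*} [NormedAddCommGroup X] [Lattice X] [HasSolidNorm X]
    [IsOrderedAddMonoid X] [NormedSpace ℝ X] [PosSMulStrictMono ℝ X] [PosSMulReflectLT ℝ X]
    [CompleteSpace X] [AddCommGroup Xbar] [Lattice Xbar] [Module ℝ Xbar]
    [CovariantClass Xbar Xbar (· + ·) (· ≤ ·)]
    (e : X →ₗ[ℝ] Xbar) (he : Monotone e)
    (M : Set (Xbar →ₗ[ℝ] ℝ))
    (hMpos : ∀ μ ∈ M, Monotone μ)
    (hMcont : ∀ μ ∈ M, ∀ (w : ℕ → X) (c : Xbar), Antitone w →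
      IsGLB (Set.range fun n => e (w n)) c →
      Filter.Tendsto (fun n => μ (e (w n))) Filter.atTop (nhds (μ c)))
    (hMsep : ∀ c d : Xbar,
      c ∈ {v : Xbar | ∃ w : ℕ → X, Antitone w ∧ IsGLB (Set.range fun n => e (w n)) v} →
      d ∈ {v : Xbar | ∃ w : ℕ → X, Antitone w ∧ IsGLB (Set.range fun n => e (w n)) v} →
      c ≠ d → ∃ μ ∈ M, μ c ≠ μ d)
    (x y z : ℕ → X) (hy : Antitone y) (hz : Antitone z)
    (hybd : BddBelow (Set.range y)) (hzbd : BddBelow (Set.range z))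
    (hxy : Filter.Tendsto (fun n => ‖x n - y n‖) Filter.atTop (nhds 0))
    (hxz : Filter.Tendsto (fun n => ‖x n - z n‖) Filter.atTop (nhds 0))
    (a b : Xbar)
    (ha : IsGLB (Set.range fun n => e (y n)) a)
    (hb : IsGLB (Set.range fun n => e (z n)) b) :
    a = b := by
  by_contra hne
  obtain ⟨μ, hμM, hμne⟩ := hMsep a b ⟨y, hy, ha⟩ ⟨z, hz, hb⟩ hne
  set f : X →ₗ[ℝ] ℝ := μ.comp e with hf
  have hfmono : Monotone f := fun u v huv => hMpos μ hμM (he huv)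
  obtain ⟨C, hC⟩ := pos_lin_bounded f hfmono
  have hya := hMcont μ hμM y a hy ha
  have hzb := hMcont μ hμM z b hz hb
  have hdiff : Filter.Tendsto (fun n => μ (e (y n)) - μ (e (z n))) Filter.atTop
      (nhds (μ a - μ b)) := hya.sub hzb
  have hnz : Filter.Tendsto (fun n => ‖y n - z n‖) Filter.atTop (nhds 0) := by
    apply squeeze_zero (fun n => norm_nonneg _)
      (fun n => ?_) (by simpa using hxy.add hxz)
    calc ‖y n - z n‖ = ‖(x n - z n) - (x n - y n)‖ := by rw [sub_sub_sub_cancel_left]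
      _ ≤ ‖x n - z n‖ + ‖x n - y n‖ := norm_sub_le _ _
      _ = ‖x n - y n‖ + ‖x n - z n‖ := add_comm _ _
  have h0 : Filter.Tendsto (fun n => μ (e (y n)) - μ (e (z n))) Filter.atTop (nhds 0) := by
    apply squeeze_zero_norm (fun n => ?_) (by simpa using hnz.const_mul C)
    calc ‖μ (e (y n)) - μ (e (z n))‖ = |f (y n - z n)| := by
          rw [hf]; simp [Real.norm_eq_abs]
      _ ≤ C * ‖y n - z n‖ := hC _
  have := tendsto_nhds_unique hdiff h0
  exact hμne (by linarith)
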